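/- For all integers p ≥ 2 and q ≥ 1, the circle integral ∮ z in C(0, 1/2), 1/(z^p · (1 − z)^q) over the circle of center 0 and radius 1/2 in ℂ equals 2·π·I·(Nat.choose (p + q − 2) (p − 1)); in particular, this circle integral is nonzero. -/

import Mathlib

open Complex
open Metric

lemma sphere_ne {z : ℂ} (hz : z ∈ Metric.sphere (0:ℂ) (1/2)) : z ≠ 0 ∧ z ≠ 1 := by
  simp only [mem_sphere_iff_norm, sub_zero] at hz
  constructor <;> rintro rfl <;> norm_num at hz

lemma integrable_aux (a b : ℕ) :
    CircleIntegrable (fun z : ℂ => 1 / (z ^ a * (1 - z) ^ b)) 0 (1/2) := by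
  apply ContinuousOn.circleIntegrable (by norm_num)
  apply ContinuousOn.div continuousOn_const (by fun_prop)
  intro z hz
  obtain ⟨h0, h1⟩ := sphere_ne hz
  exact mul_ne_zero (pow_ne_zero _ h0) (pow_ne_zero _ (sub_ne_zero.2 (Ne.symm h1)))

lemma base_a (b : ℕ) :
    (∮ z in C((0 : ℂ), 1/2), 1 / (z ^ 1 * (1 - z) ^ b)) = 2 * Real.pi * I := by
  have hd : DiffContOnCl ℂ (fun z : ℂ => ((1 - z) ^ b)⁻¹) (ball (0:ℂ) (1/2)) := by
    apply DifferentiableOn.diffContOnCl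
    rw [closure_ball (0:ℂ) (by norm_num)]
    intro z hz
    have h1 : (1:ℂ) - z ≠ 0 := by
      simp only [mem_closedBall, dist_zero_right] at hz
      intro h
      have hz1 : z = 1 := by linear_combination -h
      rw [hz1] at hz; norm_num at hz
    exact ((((differentiable_const (1:ℂ)).sub differentiable_id).pow b).differentiableAt.inv
      (pow_ne_zero _ h1)).differentiableWithinAt
  have key := hd.circleIntegral_sub_inv_smul (w := 0)
    (by simp only [mem_ball, dist_self]; norm_num)
  simp only [sub_zero, smul_eq_mul, mul_one, one_pow, inv_one] at key
  rw [← key]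
  apply circleIntegral.integral_congr (by norm_num)
  intro z hz
  simp [pow_one, div_eq_mul_inv, mul_inv, mul_comm]

lemma base_b (a : ℕ) :
    (∮ z in C((0 : ℂ), 1/2), 1 / (z ^ (a + 2) * (1 - z) ^ 0)) = 0 := by
  have key := circleIntegral.integral_sub_zpow_of_ne
    (n := -(a + 2 : ℤ)) (by omega) (0:ℂ) (0:ℂ) (1/2)
  refine (circleIntegral.integral_congr (by norm_num) fun z hz => ?_).trans key
  have : -(a + 2 : ℤ) = -((a + 2 : ℕ) : ℤ) := by push_cast; ring
  rw [sub_zero, this, zpow_neg, zpow_natCast]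
  simp

lemma my_integral_add {f g : ℂ → ℂ} {c : ℂ} {R : ℝ} (hf : CircleIntegrable f c R)
    (hg : CircleIntegrable g c R) :
    (∮ z in C(c, R), f z + g z) = (∮ z in C(c, R), f z) + ∮ z in C(c, R), g z := by
  simp only [circleIntegral, smul_add, intervalIntegral.integral_add hf.out hg.out]

lemma general (a b : ℕ) :
    (∮ z in C((0 : ℂ), 1/2), 1 / (z ^ (a + 1) * (1 - z) ^ b)) =
      2 * Real.pi * I * ((a + b - 1).choose a : ℂ) := by
  induction a generalizing b with
  | zero => simpa using base_a b
  | succ a iha =>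
    induction b with
    | zero =>
      have := base_b a
      rw [show a + 2 = a + 1 + 1 from rfl] at this
      rw [this]
      simp [Nat.choose_eq_zero_of_lt (by omega : a + 1 + 0 - 1 < a + 1)]
    | succ b ihb =>
      have hsplit : (∮ z in C((0 : ℂ), 1/2), 1 / (z ^ (a + 1 + 1) * (1 - z) ^ (b + 1))) =
          (∮ z in C((0 : ℂ), 1/2), 1 / (z ^ (a + 1) * (1 - z) ^ (b + 1))
            + 1 / (z ^ (a + 1 + 1) * (1 - z) ^ b)) := by
        apply circleIntegral.integral_congr (by norm_num)
        intro z hz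
        obtain ⟨h0, h1⟩ := sphere_ne hz
        have h1' : (1:ℂ) - z ≠ 0 := sub_ne_zero.2 (Ne.symm h1)
        field_simp
        ring
      rw [hsplit, my_integral_add (integrable_aux _ _) (integrable_aux _ _),
        iha (b + 1), ihb]
      have hch : (a + (b + 1) - 1).choose a + (a + 1 + b - 1).choose (a + 1)
          = (a + 1 + (b + 1) - 1).choose (a + 1) := by
        have e1 : a + (b + 1) - 1 = a + b := by omega
        have e2 : a + 1 + b - 1 = a + b := by omega
        have e3 : a + 1 + (b + 1) - 1 = a + b + 1 := by omega
        rw [e1, e2, e3, Nat.choose_succ_succ]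
      rw [← hch]
      push_cast
      ring

/-- For integers `p ≥ 2` and `q ≥ 1`, the integral of `1 / (z^p * (1 - z)^q)` over the circle
of center `0` and radius `1/2` equals `2 * π * I * (p + q - 2).choose (p - 1)`; in particular
it is nonzero. This is the residue computation showing that a meromorphic one-form on the
Riemann sphere with exactly two poles and one zero has nonzero residue at each pole. -/
theorem circleIntegral_two_poles_one_zero (p q : ℕ) (hp : 2 ≤ p) (hq : 1 ≤ q) :
    (∮ z in C((0 : ℂ), 1/2), 1 / (z ^ p * (1 - z) ^ q)) =
        2 * Real.pi * I * ((p + q - 2).choose (p - 1) : ℂ) ∧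
      (∮ z in C((0 : ℂ), 1/2), 1 / (z ^ p * (1 - z) ^ q)) ≠ 0 := by
  obtain ⟨a, rfl⟩ : ∃ a, p = a + 1 := ⟨p - 1, by omega⟩
  have key := general a q
  have e1 : a + 1 + q - 2 = a + q - 1 := by omega
  have e2 : a + 1 - 1 = a := by omega
  rw [e1, e2]
  refine ⟨key, key ▸ ?_⟩
  have hch : 0 < (a + q - 1).choose a := Nat.choose_pos (by omega)
  simp only [mul_ne_zero_iff, ne_eq]
  refine ⟨⟨⟨by norm_num, ?_⟩, I_ne_zero⟩, ?_⟩
  · exact_mod_cast Real.pi_ne_zero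
  · exact_mod_cast hch.ne'
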